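/- arXiv:math/0608090 — 7 statements merged into one kernel-verified Lean document; each statement's English description precedes it below -/
import Mathlib

section
/- Let G be a finite simple graph and I an independent set of G with vertex neighborhood N(I). For each k, the set of vertices of G^k that have at least one coordinate in I ∪ N(I) and whose first such coordinate lies in I, is an independent set of G^k. Moreover its fractional size tends to |I|/(|I|+|N(I)|) as k → ∞; consequently A(G) ≥ |I|/(|I|+|N(I)|). -/
open SimpleGraph Filter Topology

variable {V W : Type*}

/-- The tensor (categorical) product of two simple graphs. -/
def tensorProd (G : SimpleGraph V) (H : SimpleGraph W) : SimpleGraph (V × W) where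
  Adj p q := G.Adj p.1 q.1 ∧ H.Adj p.2 q.2
  symm := ⟨fun _ _ h => ⟨h.1.symm, h.2.symm⟩⟩
  loopless := ⟨fun p h => G.loopless.irrefl p.1 h.1⟩

/-- The k-fold tensor power of a simple graph. -/
def tensorPow (G : SimpleGraph V) (k : ℕ) : SimpleGraph (Fin k → V) where
  Adj u v := u ≠ v ∧ ∀ i, G.Adj (u i) (v i)
  symm := ⟨fun _ _ h => ⟨h.1.symm, fun i => (h.2 i).symm⟩⟩
  loopless := ⟨fun _ h => h.1 rfl⟩

/-- The tensor product of k copies of G with m copies of H. -/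
def mixPow (G : SimpleGraph V) (H : SimpleGraph W) (k m : ℕ) :
    SimpleGraph ((Fin k → V) × (Fin m → W)) where
  Adj p q := p ≠ q ∧ (∀ i, G.Adj (p.1 i) (q.1 i)) ∧ ∀ j, H.Adj (p.2 j) (q.2 j)
  symm := ⟨fun _ _ h => ⟨h.1.symm, fun i => (h.2.1 i).symm, fun j => (h.2.2 j).symm⟩⟩
  loopless := ⟨fun _ h => h.1 rfl⟩

/-- A set of vertices is independent: no two of its members are adjacent. -/
def IsIndepSet (G : SimpleGraph V) (s : Set V) : Prop :=
  ∀ ⦃u⦄, u ∈ s → ∀ ⦃v⦄, v ∈ s → ¬ G.Adj u v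

/-- The independence number of a finite graph. -/
noncomputable def indepNum (G : SimpleGraph V) [Fintype V] : ℕ :=
  sSup {n | ∃ s : Finset V, _root_.IsIndepSet G ↑s ∧ s.card = n}

/-- The independence ratio of a finite graph. -/
noncomputable def indepRatio (G : SimpleGraph V) [Fintype V] : ℝ :=
  (_root_.indepNum G : ℝ) / (Fintype.card V : ℝ)

/-- The (vertex) neighborhood of a set of vertices. -/
def nbhdSet (G : SimpleGraph V) (s : Set V) : Set V := {v | ∃ u ∈ s, G.Adj u v}

/-- a(G): the maximum of |I|/(|I|+|N(I)|) over nonempty independent sets I. -/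
noncomputable def aRatio (G : SimpleGraph V) [Fintype V] : ℝ :=
  sSup {r | ∃ I : Finset V, I.Nonempty ∧ _root_.IsIndepSet G ↑I ∧
    r = (I.card : ℝ) / ((I.card : ℝ) + ((nbhdSet G ↑I).ncard : ℝ))}

/-- A fractional perfect matching of a finite graph. -/
def IsFPM (G : SimpleGraph V) [Fintype V] [DecidableEq V] (f : Sym2 V → ℝ) : Prop :=
  (∀ e, 0 ≤ f e) ∧ (∀ e, e ∉ G.edgeSet → f e = 0) ∧
  (∀ v : V, ∑ e ∈ Finset.univ.filter (fun e : Sym2 V => v ∈ e), f e ≤ 1) ∧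
  ∑ e : Sym2 V, f e = (Fintype.card V : ℝ) / 2

theorem auxProd (k : ℕ) (i : Fin k) (c a n : ℕ) :
    ∏ j : Fin k, (if (j:ℕ) < (i:ℕ) then c else if (j:ℕ) = (i:ℕ) then a else n)
      = c ^ (i:ℕ) * a * n ^ (k - 1 - (i:ℕ)) := by
  rw [Fin.prod_univ_eq_prod_range (fun j => if j < (i:ℕ) then c else if j = (i:ℕ) then a else n) k]
  rw [← Finset.prod_range_mul_prod_Ico _ (Nat.succ_le_of_lt i.isLt), Finset.prod_range_succ]
  have h1 : ∏ j ∈ Finset.range (i:ℕ), (if j < (i:ℕ) then c else if j = (i:ℕ) then a else n) = c ^ (i:ℕ) := by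
    rw [Finset.prod_eq_pow_card (b := c) (fun j hj => by simp [Finset.mem_range.mp hj]), Finset.card_range]
  have h2 : ∏ j ∈ Finset.Ico ((i:ℕ)+1) k, (if j < (i:ℕ) then c else if j = (i:ℕ) then a else n) = n ^ (k - 1 - (i:ℕ)) := by
    rw [Finset.prod_eq_pow_card (b := n) (fun j hj => by
      have := (Finset.mem_Ico.mp hj).1
      have h3 : ¬ j < (i:ℕ) := by omega
      have h4 : j ≠ (i:ℕ) := by omega
      simp [h3, h4]), Nat.card_Ico]
    congr 1; omega
  simp [h1, h2]

theorem stmt6 (G : SimpleGraph V) [Fintype V] [Nonempty V]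
    (I : Finset V) (hI : _root_.IsIndepSet G ↑I)
    (S : (k : ℕ) → Set (Fin k → V))
    (hS : ∀ k, S k = {u | ∃ i : Fin k, u i ∈ I ∧
      ∀ j : Fin k, j < i → u j ∉ (↑I ∪ nbhdSet G ↑I : Set V)}) :
    (∀ k, _root_.IsIndepSet (tensorPow G k) (S k)) ∧
    Tendsto (fun k : ℕ => ((S k).ncard : ℝ) / ((Fintype.card V : ℝ)) ^ k) atTop
      (𝓝 ((I.card : ℝ) / ((I.card : ℝ) + ((nbhdSet G ↑I).ncard : ℝ)))) ∧
    (∀ L : ℝ, Tendsto (fun n : ℕ => indepRatio (tensorPow G (n + 1))) atTop (𝓝 L) →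
      (I.card : ℝ) / ((I.card : ℝ) + ((nbhdSet G ↑I).ncard : ℝ)) ≤ L) := by
  classical
  -- Part 1: independence
  have part1 : ∀ k, _root_.IsIndepSet (tensorPow G k) (S k) := by
    intro k u hu v hv hadj
    rw [hS k, Set.mem_setOf_eq] at hu hv
    obtain ⟨i, hiI, hiMin⟩ := hu
    obtain ⟨i', hiI', hiMin'⟩ := hv
    have hadj2 := hadj.2
    rcases lt_trichotomy i i' with h | h | h
    · exact hiMin' i h (Or.inr ⟨u i, Finset.mem_coe.mpr hiI, hadj2 i⟩)
    · subst h
      exact hI (Finset.mem_coe.mpr hiI) (Finset.mem_coe.mpr hiI') (hadj2 i)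
    · exact hiMin i' h (Or.inr ⟨v i', Finset.mem_coe.mpr hiI', (hadj2 i').symm⟩)
  set n := Fintype.card V with hn
  have hn0 : 0 < n := Fintype.card_pos
  have hnR : (0:ℝ) < (n:ℝ) := by exact_mod_cast hn0
  set NF : Finset V := ((nbhdSet G ↑I).toFinite).toFinset with hNFdef
  have hNFcoe : (↑NF : Set V) = nbhdSet G ↑I := Set.Finite.coe_toFinset _
  have hncard : (nbhdSet G ↑I).ncard = NF.card := by
    rw [← hNFcoe, Set.ncard_coe_finset]
  have hdisj : Disjoint I NF := by
    rw [Finset.disjoint_left]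
    intro v hvI hvN
    rw [← Finset.mem_coe, hNFcoe] at hvN
    obtain ⟨u, hu, hadj⟩ := hvN
    exact hI hu (Finset.mem_coe.mpr hvI) hadj
  set U : Finset V := I ∪ NF with hUdef
  have hUcard : U.card = I.card + NF.card := Finset.card_union_of_disjoint hdisj
  have hUcoe : (↑U : Set V) = ↑I ∪ nbhdSet G ↑I := by rw [hUdef, Finset.coe_union, hNFcoe]
  have hUn : U.card ≤ n := Finset.card_le_univ U
  set c := n - U.card with hcdef
  -- counting
  have key : ∀ k, ∃ Sf : Finset (Fin k → V), ↑Sf = S k ∧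
      Sf.card = ∑ i : Fin k, c ^ (i:ℕ) * I.card * n ^ (k - 1 - (i:ℕ)) := by
    intro k
    set T : Fin k → Finset (Fin k → V) := fun i =>
      Fintype.piFinset (fun j => if (j:ℕ) < (i:ℕ) then Uᶜ else if (j:ℕ) = (i:ℕ) then I
        else Finset.univ) with hT
    have hmemT : ∀ (i : Fin k) (u : Fin k → V), u ∈ T i ↔
        ∀ j : Fin k, u j ∈ (if (j:ℕ) < (i:ℕ) then Uᶜ else if (j:ℕ) = (i:ℕ) then I
          else Finset.univ) := by
      intro i u; exact Fintype.mem_piFinset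
    have hTdisj : ∀ i i' : Fin k, i < i' → ∀ u, u ∈ T i → u ∈ T i' → False := by
      intro i i' hlt u hu hu'
      have h1 := (hmemT i u).mp hu i
      have h2 := (hmemT i' u).mp hu' i
      have hii : ¬ ((i:ℕ) < (i:ℕ)) := lt_irrefl _
      rw [if_neg hii, if_pos rfl] at h1
      rw [if_pos (show (i:ℕ) < (i':ℕ) from hlt)] at h2
      exact (Finset.mem_compl.mp h2) (Finset.mem_union_left _ h1)
    refine ⟨Finset.univ.biUnion T, ?_, ?_⟩
    · ext u
      simp only [Finset.coe_biUnion, Finset.coe_univ, Set.mem_iUnion, Finset.mem_coe,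
        Set.mem_univ, Set.iUnion_true, hS k, Set.mem_setOf_eq]
      constructor
      · rintro ⟨i, hu⟩
        rw [hmemT] at hu
        have h1 := hu i
        rw [if_neg (lt_irrefl _), if_pos rfl] at h1
        refine ⟨i, h1, fun j hj hmem => ?_⟩
        have h2 := hu j
        rw [if_pos (show (j:ℕ) < (i:ℕ) from hj)] at h2
        rw [← hUcoe, Finset.mem_coe] at hmem
        exact (Finset.mem_compl.mp h2) hmem
      · rintro ⟨i, hiI, hmin⟩
        refine ⟨i, (hmemT i u).mpr fun j => ?_⟩
        by_cases hj : (j:ℕ) < (i:ℕ)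
        · rw [if_pos hj, Finset.mem_compl]
          intro hmem
          exact hmin j hj (by rw [← hUcoe]; exact Finset.mem_coe.mpr hmem)
        · rw [if_neg hj]
          by_cases hj' : (j:ℕ) = (i:ℕ)
          · rw [if_pos hj']
            have : j = i := Fin.ext hj'
            rwa [this]
          · rw [if_neg hj']; exact Finset.mem_univ _
    · rw [Finset.card_biUnion]
      · refine Finset.sum_congr rfl fun i _ => ?_
        rw [hT]
        rw [Fintype.card_piFinset]
        have : ∀ j : Fin k, (if (j:ℕ) < (i:ℕ) then Uᶜ else if (j:ℕ) = (i:ℕ) then I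
            else (Finset.univ : Finset V)).card =
            (if (j:ℕ) < (i:ℕ) then Uᶜ.card else if (j:ℕ) = (i:ℕ) then I.card
            else (Finset.univ : Finset V).card) := by
          intro j
          by_cases h1 : (j:ℕ) < (i:ℕ) <;> by_cases h2 : (j:ℕ) = (i:ℕ) <;> simp [h1, h2]
        rw [Finset.prod_congr rfl fun j _ => this j]
        rw [show Uᶜ.card = c by rw [Finset.card_compl, hcdef, hn],
          show (Finset.univ : Finset V).card = n by rw [Finset.card_univ, hn]]
        exact auxProd k i c I.card n
      · intro i _ i' _ hne
        rw [Function.onFun, Finset.disjoint_left]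
        intro u hu hu'
        rcases lt_or_gt_of_ne hne with h | h
        · exact hTdisj i i' h u hu hu'
        · exact hTdisj i' i h u hu' hu
  have hSncard : ∀ k, (S k).ncard =
      ∑ i : Fin k, c ^ (i:ℕ) * I.card * n ^ (k - 1 - (i:ℕ)) := by
    intro k
    obtain ⟨Sf, hcoe, hcard⟩ := key k
    rw [← hcoe, Set.ncard_coe_finset, hcard]
  rcases Finset.eq_empty_or_nonempty I with hIe | hIne
  · -- empty case
    subst hIe
    have hNe : nbhdSet G (↑(∅ : Finset V)) = ∅ := by
      ext v; simp [nbhdSet]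
    have hSe : ∀ k, (S k).ncard = 0 := by
      intro k; rw [hSncard k]; simp
    refine ⟨part1, ?_, ?_⟩
    · simp only [hSe, hNe, Set.ncard_empty, Finset.card_empty, Nat.cast_zero, zero_div,
        Nat.cast_ofNat, add_zero]
      exact tendsto_const_nhds
    · intro L hL
      simp only [hNe, Set.ncard_empty, Finset.card_empty, Nat.cast_zero, zero_div, add_zero]
      refine ge_of_tendsto' hL fun m => ?_
      exact div_nonneg (Nat.cast_nonneg _) (Nat.cast_nonneg _)
  · -- nonempty case
    have hU1 : 1 ≤ U.card := by
      rw [hUcard]; have := Finset.card_pos.mpr hIne; omega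
    have hclt : c < n := by omega
    set q : ℝ := (c:ℝ) / (n:ℝ) with hqdef
    set A : ℝ := (I.card : ℝ) with hA
    set B : ℝ := (NF.card : ℝ) with hB
    have hA1 : 1 ≤ A := by rw [hA]; exact_mod_cast Finset.card_pos.mpr hIne
    have hAB : 0 < A + B := by
      have : (0:ℝ) ≤ B := by rw [hB]; positivity
      linarith
    have hcR : (c:ℝ) = (n:ℝ) - (A + B) := by
      rw [hcdef, Nat.cast_sub hUn, hUcard]; push_cast; ring
    have hq0 : 0 ≤ q := by rw [hqdef]; positivity
    have hq1 : q < 1 := by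
      rw [hqdef, div_lt_one hnR]; exact_mod_cast hclt
    have hratio : ∀ k, ((S k).ncard : ℝ) / (n:ℝ) ^ k = (A / (A + B)) * (1 - q ^ k) := by
      intro k
      rcases Nat.eq_zero_or_pos k with hk0 | hk1
      · subst hk0; simp [hSncard 0]
      rw [hSncard k]
      push_cast
      rw [Fin.sum_univ_eq_sum_range (fun i => (c:ℝ) ^ i * (I.card:ℝ) * (n:ℝ) ^ (k - 1 - i)) k]
      have hterm : ∀ i ∈ Finset.range k,
          (c:ℝ) ^ i * (I.card:ℝ) * (n:ℝ) ^ (k - 1 - i) = (A * (n:ℝ) ^ (k-1)) * q ^ i := by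
        intro i hi
        have hik : i ≤ k - 1 := by have := Finset.mem_range.mp hi; omega
        rw [hqdef, div_pow, pow_sub₀ (n:ℝ) (ne_of_gt hnR) hik, hA]
        field_simp
      rw [Finset.sum_congr rfl hterm, ← Finset.mul_sum, geom_sum_eq (ne_of_lt hq1)]
      have hnk : (n:ℝ) ^ k = (n:ℝ) ^ (k-1) * n := by
        rw [← pow_succ]; congr 1; omega
      have hq1' : q - 1 = -((A+B)/n) := by
        rw [hqdef, hcR]; field_simp; ring
      have hne : A + B ≠ 0 := ne_of_gt hAB
      have hnne : (n:ℝ) ≠ 0 := ne_of_gt hnR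
      have h1 : (n:ℝ) ^ (k-1) ≠ 0 := by positivity
      have h2 : (q ^ k - 1) / (q - 1) = (1 - q ^ k) * ((n:ℝ) / (A+B)) := by
        rw [hq1']
        field_simp
        ring
      rw [h2, hnk]
      field_simp
    have htend : Tendsto (fun k : ℕ => ((S k).ncard : ℝ) / (n:ℝ) ^ k) atTop
        (𝓝 (A / (A + B))) := by
      have h0 : Tendsto (fun k : ℕ => q ^ k) atTop (𝓝 0) :=
        tendsto_pow_atTop_nhds_zero_of_lt_one hq0 hq1
      have := ((tendsto_const_nhds (x := (1:ℝ))).sub h0).const_mul (A / (A + B))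
      simp only [sub_zero, mul_one] at this
      exact Tendsto.congr (fun k => (hratio k).symm) this
    have hgoalcast : (I.card : ℝ) / ((I.card : ℝ) + ((nbhdSet G ↑I).ncard : ℝ)) = A / (A + B) := by
      rw [hncard, hA, hB]
    refine ⟨part1, by rw [hgoalcast]; exact htend, ?_⟩
    intro L hL
    rw [hgoalcast]
    have hle : ∀ k, ((S k).ncard : ℝ) / (n:ℝ) ^ k ≤ indepRatio (tensorPow G k) := by
      intro k
      obtain ⟨Sf, hcoe, _⟩ := key k
      have hmem : Sf.card ∈ {m | ∃ s : Finset (Fin k → V),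
          _root_.IsIndepSet (tensorPow G k) ↑s ∧ s.card = m} :=
        ⟨Sf, by rw [hcoe]; exact part1 k, rfl⟩
      have hbdd : BddAbove {m | ∃ s : Finset (Fin k → V),
          _root_.IsIndepSet (tensorPow G k) ↑s ∧ s.card = m} := by
        refine ⟨Fintype.card (Fin k → V), ?_⟩
        rintro m ⟨s, -, rfl⟩
        exact Finset.card_le_univ s
      have hnum : Sf.card ≤ _root_.indepNum (tensorPow G k) := le_csSup hbdd hmem
      have hcardV : (Fintype.card (Fin k → V) : ℝ) = (n:ℝ) ^ k := by
        rw [Fintype.card_fun, Fintype.card_fin, hn]; push_cast; ring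
      rw [indepRatio, hcardV, ← hcoe, Set.ncard_coe_finset]
      have hnum' : (Sf.card : ℝ) ≤ (_root_.indepNum (tensorPow G k) : ℝ) := by exact_mod_cast hnum
      gcongr
    refine le_of_tendsto_of_tendsto' (htend.comp (tendsto_add_atTop_nat 1)) hL fun m => ?_
    exact hle (m + 1)
end

section
/- Let G be a finite simple graph and I an independent set of G. For each k, the set of all vertices of G^k having strictly more than k/2 coordinates in I is an independent set of G^k. -/
open SimpleGraph Filter Topology

variable {V W : Type*}

theorem stmt7 (G : SimpleGraph V) (I : Set V) (hI : _root_.IsIndepSet G I) (k : ℕ) :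
    _root_.IsIndepSet (tensorPow G k)
      {u : Fin k → V | k < 2 * {i : Fin k | u i ∈ I}.ncard} := by
  intro u hu v hv hadj
  simp only [Set.mem_setOf_eq] at hu hv
  obtain ⟨i, hui, hvi⟩ : ({i | u i ∈ I} ∩ {i | v i ∈ I}).Nonempty := by
    rw [Set.nonempty_iff_ne_empty]
    intro h
    have h1 := Set.ncard_inter_add_ncard_union {i : Fin k | u i ∈ I} {i | v i ∈ I}
      (Set.toFinite _) (Set.toFinite _)
    have h2 : ({i : Fin k | u i ∈ I} ∪ {i | v i ∈ I}).ncard ≤ k := by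
      have := Set.ncard_le_ncard (Set.subset_univ ({i : Fin k | u i ∈ I} ∪ {i | v i ∈ I}))
        Set.finite_univ
      simpa [Set.ncard_univ] using this
    rw [h, Set.ncard_empty] at h1
    omega
  exact hI hui hvi (hadj.2 i)
end

section
/- If a finite simple graph G satisfies i(G) > 1/2, then A(G) = 1, i.e., the independence ratios of tensor powers i(G^k) tend to 1 as k → ∞. -/
open SimpleGraph Filter Topology

variable {V W : Type*}

lemma card_le_indepNum (G : SimpleGraph V) [Fintype V] (s : Finset V)
    (hs : _root_.IsIndepSet G ↑s) : s.card ≤ _root_.indepNum G := by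
  apply le_csSup
  · exact ⟨Fintype.card V, fun n ⟨t, _, ht⟩ => ht ▸ t.card_le_univ⟩
  · exact ⟨s, hs, rfl⟩

lemma indepNum_le_card (G : SimpleGraph V) [Fintype V] :
    _root_.indepNum G ≤ Fintype.card V := by
  refine csSup_le ⟨0, ?_⟩ ?_
  · exact ⟨∅, by simp [_root_.IsIndepSet], by simp⟩
  rintro n ⟨t, _, ht⟩
  exact ht ▸ t.card_le_univ

lemma exists_max_indep (G : SimpleGraph V) [Fintype V] :
    ∃ s : Finset V, _root_.IsIndepSet G ↑s ∧ s.card = _root_.indepNum G := by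
  have h : _root_.indepNum G ∈ {n | ∃ s : Finset V, _root_.IsIndepSet G ↑s ∧ s.card = n} := by
    refine Nat.sSup_mem ⟨0, ?_⟩ ?_
    · exact ⟨∅, by simp [_root_.IsIndepSet], by simp⟩
    · exact ⟨Fintype.card V, fun n ⟨t, _, ht⟩ => ht ▸ t.card_le_univ⟩
  exact h

lemma tail_bound (G : SimpleGraph V) [Fintype V] (I : Finset V) (hI : _root_.IsIndepSet G ↑I)
    (h2 : Fintype.card V < 2 * I.card) (K : ℕ) (hK : 1 ≤ K) :
    ((Fintype.card V : ℝ))^K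
      - (2 * Real.sqrt ((I.card : ℝ) * ((Fintype.card V : ℝ) - (I.card : ℝ))))^K
      ≤ (_root_.indepNum (tensorPow G K) : ℝ) := by
  classical
  set n := Fintype.card V with hn
  set c : (Fin K → V) → ℕ := fun v => (Finset.univ.filter fun i => v i ∈ I).card with hc
  set S : Finset (Fin K → V) := Finset.univ.filter (fun v => K < 2 * c v) with hSdef
  set T : Finset (Fin K → V) := Finset.univ.filter (fun v => ¬ (K < 2 * c v)) with hTdef
  have hαn : I.card ≤ n := I.card_le_univ
  have hS : _root_.IsIndepSet (tensorPow G K) ↑S := by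
    intro u hu v hv hadj
    obtain ⟨hne, hadj⟩ := hadj
    rw [Finset.mem_coe, hSdef, Finset.mem_filter] at hu hv
    have hAB : ((Finset.univ.filter fun i => u i ∈ I) ∩
        (Finset.univ.filter fun i => v i ∈ I)).Nonempty := by
      rw [← Finset.card_pos]
      have h1 := Finset.card_union_add_card_inter (Finset.univ.filter fun i => u i ∈ I)
        (Finset.univ.filter fun i => v i ∈ I)
      have h3 := Finset.card_le_univ ((Finset.univ.filter fun i => u i ∈ I) ∪
        (Finset.univ.filter fun i => v i ∈ I))
      simp only [Finset.card_univ, Fintype.card_fin] at h3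
      have := hu.2; have := hv.2
      simp only [hc] at *
      omega
    obtain ⟨i, hi⟩ := hAB
    simp only [Finset.mem_inter, Finset.mem_filter] at hi
    exact hI (Finset.mem_coe.2 hi.1.2) (Finset.mem_coe.2 hi.2.2) (hadj i)
  have hST : S.card + T.card = n ^ K := by
    rw [Finset.card_filter_add_card_filter_not, Finset.card_univ, Fintype.card_fun,
      Fintype.card_fin]
  have hTbound : (T.card : ℝ) ≤
      (2 * Real.sqrt ((I.card : ℝ) * ((n : ℝ) - (I.card : ℝ))))^K := by
    by_cases hβ : I.card = n
    · have hIuniv : I = Finset.univ := Finset.eq_univ_of_card I hβ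
      have hT : T = ∅ := by
        rw [hTdef, Finset.filter_eq_empty_iff]
        intro v _
        push_neg
        have : c v = K := by
          simp [hc, hIuniv, Finset.card_univ]
        omega
      rw [hT]
      simp only [Finset.card_empty, Nat.cast_zero]
      rw [hβ, sub_self, mul_zero, Real.sqrt_zero, mul_zero]
      exact le_of_eq (zero_pow (by omega)).symm
    · -- 0 < I.card < n
      have hα1 : 1 ≤ I.card := by omega
      set a : ℝ := (I.card : ℝ) with ha
      set b : ℝ := (n : ℝ) - (I.card : ℝ) with hb
      have ha0 : 0 < a := by positivity
      have hb0 : 0 < b := by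
        rw [hb]; have : I.card < n := lt_of_le_of_ne hαn hβ
        have : (I.card : ℝ) < (n : ℝ) := by exact_mod_cast this
        linarith
      have hba : b < a := by
        rw [ha, hb]
        have : (n : ℝ) < 2 * (I.card : ℝ) := by exact_mod_cast h2
        linarith
      set s : ℝ := Real.sqrt (a / b) with hs'
      have hs0 : 0 < s := Real.sqrt_pos.2 (by positivity)
      have hs1 : 1 ≤ s := by
        rw [hs']
        rw [show (1:ℝ) = Real.sqrt 1 by simp]
        exact Real.sqrt_le_sqrt (by rw [le_div_iff₀ hb0]; linarith)
      have hs2 : s ^ 2 = a / b := Real.sq_sqrt (by positivity)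
      set w : ℝ := b / a with hw'
      have hw0 : 0 ≤ w := by positivity
      -- pointwise bound
      have hpt : ∀ v ∈ T, (1:ℝ) ≤ s ^ K * w ^ (c v) := by
        intro v hv
        rw [hTdef, Finset.mem_filter] at hv
        have hcv : 2 * c v ≤ K := by omega
        have : s ^ K * w ^ (c v) = s ^ (K - 2 * c v) := by
          have hK' : K = (K - 2 * c v) + 2 * c v := by omega
          calc s ^ K * w ^ (c v) = s ^ ((K - 2 * c v) + 2 * c v) * w ^ (c v) := by rw [← hK']
            _ = s ^ (K - 2 * c v) * ((s ^ 2) ^ (c v) * w ^ (c v)) := by ring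
            _ = s ^ (K - 2 * c v) * ((a / b * (b / a)) ^ (c v)) := by
                rw [hs2, ← mul_pow]
            _ = s ^ (K - 2 * c v) := by
                rw [div_mul_div_comm, mul_comm a b, div_self (mul_pos hb0 ha0).ne', one_pow, mul_one]
        rw [this]
        exact one_le_pow₀ hs1
      -- the weighted sum identity
      have hprod : ∀ v : Fin K → V, w ^ (c v) = ∏ i, (if v i ∈ I then w else (1:ℝ)) := by
        intro v
        rw [Finset.prod_ite, Finset.prod_const, Finset.prod_const, one_pow, mul_one]
      have hsumV : (∑ x : V, if x ∈ I then w else (1:ℝ)) = 2 * b := by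
        have hfeq : Finset.univ.filter (fun x => x ∈ I) = I := by simp
        have hcardnot : (Finset.univ.filter (fun x => ¬ x ∈ I)).card = n - I.card := by
          have h6 := Finset.card_filter_add_card_filter_not
            (s := (Finset.univ : Finset V)) (p := fun x => x ∈ I)
          rw [hfeq, Finset.card_univ] at h6
          omega
        rw [Finset.sum_ite, Finset.sum_const, Finset.sum_const, hfeq, hcardnot]
        simp only [nsmul_eq_mul, smul_eq_mul, mul_one]
        rw [Nat.cast_sub hαn]
        have h7 : (I.card : ℝ) * w = b := by
          rw [hw', ← ha, mul_comm, div_mul_cancel₀ _ (ne_of_gt ha0)]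
        rw [h7, ← hb]; ring
      have hsum : ∑ v : Fin K → V, w ^ (c v) = (2 * b) ^ K := by
        have hpow := Finset.sum_pow' (Finset.univ : Finset V)
          (fun x => if x ∈ I then w else (1:ℝ)) K
        rw [Fintype.piFinset_univ] at hpow
        calc ∑ v : Fin K → V, w ^ (c v)
            = ∑ v : Fin K → V, ∏ i, (if v i ∈ I then w else (1:ℝ)) :=
              Finset.sum_congr rfl (fun v _ => hprod v)
          _ = (∑ x : V, if x ∈ I then w else (1:ℝ)) ^ K := hpow.symm
          _ = (2 * b) ^ K := by rw [hsumV]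
      have h1 : (T.card : ℝ) ≤ s ^ K * (2 * b) ^ K := by
        calc (T.card : ℝ) = ∑ _v ∈ T, (1:ℝ) := by simp
          _ ≤ ∑ v ∈ T, s ^ K * w ^ (c v) := Finset.sum_le_sum hpt
          _ ≤ ∑ v : Fin K → V, s ^ K * w ^ (c v) :=
              Finset.sum_le_sum_of_subset_of_nonneg (Finset.subset_univ T)
                (fun v _ _ => by positivity)
          _ = s ^ K * ∑ v : Fin K → V, w ^ (c v) := by rw [Finset.mul_sum]
          _ = s ^ K * (2 * b) ^ K := by rw [hsum]
      have hsb : Real.sqrt (a / b) * b = Real.sqrt (a * b) := by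
        rw [show b = Real.sqrt (b ^ 2) from (Real.sqrt_sq hb0.le).symm,
          ← Real.sqrt_mul (by positivity)]
        rw [Real.sqrt_sq hb0.le]
        congr 1
        field_simp
      have hCs : s * (2 * b) = 2 * Real.sqrt (a * b) := by
        calc s * (2 * b) = 2 * (Real.sqrt (a / b) * b) := by rw [hs']; ring
          _ = 2 * Real.sqrt (a * b) := by rw [hsb]
      calc (T.card : ℝ) ≤ s ^ K * (2 * b) ^ K := h1
        _ = (s * (2 * b)) ^ K := (mul_pow _ _ _).symm
        _ = (2 * Real.sqrt (a * b)) ^ K := by rw [hCs]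
  have h4 : (S.card : ℝ) ≤ (_root_.indepNum (tensorPow G K) : ℝ) := by
    exact_mod_cast card_le_indepNum _ _ hS
  have h5 : (S.card : ℝ) + (T.card : ℝ) = ((n : ℝ)) ^ K := by exact_mod_cast hST
  linarith


theorem stmt8 (G : SimpleGraph V) [Fintype V] [Nonempty V]
    (h : 1 / 2 < indepRatio G) :
    Tendsto (fun k : ℕ => indepRatio (tensorPow G (k + 1))) atTop (𝓝 1) := by
  classical
  obtain ⟨I, hI, hIcard⟩ := exists_max_indep G
  set n := Fintype.card V with hn
  have hn0 : 0 < n := Fintype.card_pos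
  have h2 : n < 2 * I.card := by
    rw [indepRatio] at h
    have h' := (div_lt_div_iff₀ (by norm_num) (by positivity : (0:ℝ) < (n:ℝ))).1 h
    have hx : (n:ℝ) < 2 * (I.card:ℝ) := by rw [hIcard]; push_cast at h' ⊢; linarith
    exact_mod_cast hx
  have h2' : (n:ℝ) < 2 * (I.card:ℝ) := by exact_mod_cast h2
  have hle : (I.card:ℝ) ≤ (n:ℝ) := by exact_mod_cast I.card_le_univ
  set t : ℝ := 2 * Real.sqrt ((I.card:ℝ) * ((n:ℝ) - (I.card:ℝ))) / (n:ℝ) with ht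
  have ht0 : 0 ≤ t := by positivity
  have ht1 : t < 1 := by
    rw [ht, div_lt_one (by positivity)]
    have hsq : Real.sqrt ((I.card:ℝ) * ((n:ℝ) - (I.card:ℝ))) < (n:ℝ)/2 := by
      rw [show ((n:ℝ)/2) = Real.sqrt (((n:ℝ)/2)^2) from (Real.sqrt_sq (by positivity)).symm]
      apply Real.sqrt_lt_sqrt (by nlinarith)
      nlinarith
    linarith
  have hmain : ∀ k : ℕ, 1 - t^(k+1) ≤ indepRatio (tensorPow G (k+1)) ∧
      indepRatio (tensorPow G (k+1)) ≤ 1 := by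
    intro k
    have hcardW : (Fintype.card (Fin (k+1) → V) : ℝ) = ((n:ℝ))^(k+1) := by
      rw [Fintype.card_fun, Fintype.card_fin]; push_cast; ring
    constructor
    · have hb := tail_bound G I hI h2 (k+1) (Nat.succ_le_succ (Nat.zero_le k))
      have hpos : (0:ℝ) < ((n:ℝ))^(k+1) := by positivity
      rw [indepRatio, hcardW, le_div_iff₀ hpos]
      have htn : t * (n:ℝ) = 2 * Real.sqrt ((I.card:ℝ) * ((n:ℝ) - (I.card:ℝ))) := by
        rw [ht]; field_simp
      calc (1 - t^(k+1)) * ((n:ℝ))^(k+1)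
          = ((n:ℝ))^(k+1) - (t * (n:ℝ))^(k+1) := by rw [mul_pow]; ring
        _ = ((n:ℝ))^(k+1)
            - (2 * Real.sqrt ((I.card:ℝ) * ((n:ℝ) - (I.card:ℝ))))^(k+1) := by rw [htn]
        _ ≤ (_root_.indepNum (tensorPow G (k+1)) : ℝ) := hb
    · rw [indepRatio]
      apply div_le_one_of_le₀
      · exact_mod_cast indepNum_le_card (tensorPow G (k+1))
      · positivity
  have hlow : Tendsto (fun k : ℕ => 1 - t^(k+1)) atTop (𝓝 1) := by
    have h0 : Tendsto (fun k : ℕ => t^(k+1)) atTop (𝓝 0) :=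
      (tendsto_pow_atTop_nhds_zero_of_lt_one ht0 ht1).comp (tendsto_add_atTop_nat 1)
    have h1 := (tendsto_const_nhds (x := (1:ℝ)) (f := atTop)).sub h0
    simpa using h1
  exact tendsto_of_tendsto_of_tendsto_of_le_of_le hlow tendsto_const_nhds
    (fun k => (hmain k).1) (fun k => (hmain k).2)
end

section
/- (Tutte's lemma) Let G be a finite simple graph. If every independent set I of G satisfies |N(I)| ≥ |I|, then every subset S of V(G) satisfies |N(S)| ≥ |S|. -/
open SimpleGraph Filter Topology

variable {V W : Type*}

theorem stmt9 (G : SimpleGraph V) [Fintype V]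
    (h : ∀ I : Set V, _root_.IsIndepSet G I → I.ncard ≤ (nbhdSet G I).ncard) :
    ∀ S : Set V, S.ncard ≤ (nbhdSet G S).ncard := by
  intro S
  set D : Set V := S \ nbhdSet G S with hD
  have hDind : _root_.IsIndepSet G D := fun u hu v hv hadj => hv.2 ⟨u, hu.1, hadj⟩
  have hND : nbhdSet G D ⊆ nbhdSet G S \ S := by
    rintro v ⟨u, hu, hadj⟩
    exact ⟨⟨u, hu.1, hadj⟩, fun hvS => hu.2 ⟨v, hvS, hadj.symm⟩⟩
  have h1 : D.ncard ≤ (nbhdSet G S \ S).ncard :=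
    (h D hDind).trans (Set.ncard_le_ncard hND (Set.toFinite _))
  calc S.ncard = (S ∩ nbhdSet G S).ncard + D.ncard := by
        rw [hD, Set.ncard_inter_add_ncard_diff_eq_ncard S (nbhdSet G S) (Set.toFinite _)]
    _ ≤ (nbhdSet G S ∩ S).ncard + (nbhdSet G S \ S).ncard := by
        rw [Set.inter_comm]; exact Nat.add_le_add le_rfl h1
    _ = (nbhdSet G S).ncard :=
        Set.ncard_inter_add_ncard_diff_eq_ncard _ S (Set.toFinite _)
end

section
/- If f is a fractional perfect matching of G and g is a fractional perfect matching of H, then assigning the edge {(u,v),(u',v')} of G × H the weight f({u,u'}) · g({v,v'}) (summed appropriately over the edge pairs projecting to it) yields a fractional perfect matching of G × H. In particular, if G has a fractional perfect matching then so does G^k for every k ≥ 1. -/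
open SimpleGraph Filter Topology

variable {V W : Type*}

section helpers
variable {α : Type*} [Fintype α] [DecidableEq α]

lemma sum_incident (f : Sym2 α → ℝ) (x : α) :
    ∑ e ∈ Finset.univ.filter (fun e : Sym2 α => x ∈ e), f e = ∑ y, f s(x, y) := by
  symm
  apply Finset.sum_bij (fun y _ => s(x, y))
  · intro y _; simp
  · intro a _ b _ h; exact Sym2.congr_right.mp h
  · intro e he
    simp only [Finset.mem_filter] at he
    exact ⟨Sym2.Mem.other he.2, Finset.mem_univ _, Sym2.other_spec he.2⟩
  · intros; rfl

lemma sum_pairs (f : Sym2 α → ℝ) (hdiag : ∀ a, f s(a, a) = 0) :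
    ∑ a, ∑ b, f s(a, b) = 2 * ∑ e, f e := by
  have h1 : ∀ a : α, ∑ b, f s(a, b)
      = ∑ e : Sym2 α, if a ∈ e then f e else 0 := by
    intro a
    rw [← sum_incident f a, Finset.sum_filter]
  calc ∑ a, ∑ b, f s(a, b) = ∑ a : α, ∑ e : Sym2 α, if a ∈ e then f e else 0 := by
        exact Finset.sum_congr rfl fun a _ => h1 a
    _ = ∑ e : Sym2 α, ∑ a : α, if a ∈ e then f e else 0 := Finset.sum_comm
    _ = ∑ e : Sym2 α, 2 * f e := by
        apply Finset.sum_congr rfl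
        intro e _
        induction e using Sym2.ind with
        | _ u v =>
          rw [← Finset.sum_filter, Finset.sum_const, nsmul_eq_mul]
          rcases eq_or_ne u v with h | h
          · subst h; rw [hdiag, mul_zero, mul_zero]
          · congr 1
            have : Finset.univ.filter (fun a => a ∈ s(u, v)) = {u, v} := by
              ext a; simp [Sym2.mem_iff]
            rw [this, Finset.card_pair h]
            norm_num
    _ = 2 * ∑ e, f e := by rw [Finset.mul_sum]
end helpers

theorem stmt12 (G : SimpleGraph V) (H : SimpleGraph W)
    [Fintype V] [Fintype W] [DecidableEq V] [DecidableEq W]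
    (f : Sym2 V → ℝ) (g : Sym2 W → ℝ) (hf : IsFPM G f) (hg : IsFPM H g)
    (w : Sym2 (V × W) → ℝ)
    (hw : ∀ p q : V × W, w s(p, q) = f s(p.1, q.1) * g s(p.2, q.2)) :
    IsFPM (tensorProd G H) w ∧
    ∀ k : ℕ, 1 ≤ k → ∃ h : Sym2 (Fin k → V) → ℝ, IsFPM (tensorPow G k) h := by
  obtain ⟨hf0, hfE, hfd, hfs⟩ := hf
  obtain ⟨hg0, hgE, hgd, hgs⟩ := hg
  have hfdiag : ∀ a : V, f s(a, a) = 0 := fun a => hfE _ (by simp)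
  have hgdiag : ∀ a : W, g s(a, a) = 0 := fun a => hgE _ (by simp)
  -- row sums for f and g
  have hfrow : ∀ a : V, ∑ b, f s(a, b) ≤ 1 := fun a => by
    rw [← sum_incident]; exact hfd a
  have hgrow : ∀ a : W, ∑ b, g s(a, b) ≤ 1 := fun a => by
    rw [← sum_incident]; exact hgd a
  have hfrow0 : ∀ a : V, 0 ≤ ∑ b, f s(a, b) := fun a =>
    Finset.sum_nonneg fun b _ => hf0 _
  have hgrow0 : ∀ a : W, 0 ≤ ∑ b, g s(a, b) := fun a =>
    Finset.sum_nonneg fun b _ => hg0 _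
  have hftot : ∑ a, ∑ b, f s(a, b) = (Fintype.card V : ℝ) := by
    rw [sum_pairs f hfdiag, hfs]; ring
  have hgtot : ∑ a, ∑ b, g s(a, b) = (Fintype.card W : ℝ) := by
    rw [sum_pairs g hgdiag, hgs]; ring
  constructor
  · refine ⟨?_, ?_, ?_, ?_⟩
    · intro e
      induction e using Sym2.ind with
      | _ p q => rw [hw]; exact mul_nonneg (hf0 _) (hg0 _)
    · intro e he
      induction e using Sym2.ind with
      | _ p q =>
        rw [SimpleGraph.mem_edgeSet] at he
        rw [hw]
        by_cases hG : G.Adj p.1 q.1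
        · have hH : ¬ H.Adj p.2 q.2 := fun h => he (show G.Adj p.1 q.1 ∧ H.Adj p.2 q.2 from ⟨hG, h⟩)
          rw [hgE _ (by simpa using hH), mul_zero]
        · rw [hfE _ (by simpa using hG), zero_mul]
    · intro x
      rw [sum_incident]
      have : ∑ y : V × W, w s(x, y)
          = (∑ a, f s(x.1, a)) * (∑ b, g s(x.2, b)) := by
        rw [Finset.sum_mul_sum, Fintype.sum_prod_type]
        exact Finset.sum_congr rfl fun a _ =>
          Finset.sum_congr rfl fun b _ => hw x (a, b)
      rw [this]
      exact mul_le_one₀ (hfrow _) (hgrow0 _) (hgrow _)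
    · have hwdiag : ∀ p : V × W, w s(p, p) = 0 := fun p => by
        rw [hw, hfdiag, zero_mul]
      have key : ∑ p : V × W, ∑ q : V × W, w s(p, q)
          = (∑ a, ∑ b, f s(a, b)) * (∑ c, ∑ d, g s(c, d)) := by
        rw [Finset.sum_mul_sum, Fintype.sum_prod_type]
        apply Finset.sum_congr rfl; intro a _
        apply Finset.sum_congr rfl; intro c _
        rw [Finset.sum_mul_sum, Fintype.sum_prod_type]
        apply Finset.sum_congr rfl; intro b _
        apply Finset.sum_congr rfl; intro d _
        exact hw (a, c) (b, d)
      have := sum_pairs w hwdiag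
      rw [key, hftot, hgtot] at this
      rw [Fintype.card_prod]
      push_cast
      linarith
  · intro k hk
    set h : Sym2 (Fin k → V) → ℝ := Sym2.lift ⟨fun u v => ∏ i, f s(u i, v i), fun u v => by
      apply Finset.prod_congr rfl; intro i _; rw [Sym2.eq_swap]⟩ with hh
    have hmk : ∀ u v : Fin k → V, h s(u, v) = ∏ i, f s(u i, v i) := fun u v =>
      Sym2.lift_mk _ _ _
    have hdiag : ∀ u : Fin k → V, h s(u, u) = 0 := fun u => by
      rw [hmk]
      exact Finset.prod_eq_zero (Finset.mem_univ ⟨0, hk⟩) (hfdiag _)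
    have step1 : ∀ u : Fin k → V, ∑ v : Fin k → V, h s(u, v)
        = ∏ i, ∑ y, f s(u i, y) := by
      intro u
      rw [Finset.prod_univ_sum, Fintype.piFinset_univ]
      exact Finset.sum_congr rfl fun v _ => hmk u v
    refine ⟨h, ?_, ?_, ?_, ?_⟩
    · intro e
      induction e using Sym2.ind with
      | _ u v =>
        rw [hmk]
        exact Finset.prod_nonneg fun i _ => hf0 _
    · intro e he
      induction e using Sym2.ind with
      | _ u v =>
        rw [SimpleGraph.mem_edgeSet] at he
        rw [hmk]
        by_cases huv : u = v
        · subst huv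
          exact Finset.prod_eq_zero (Finset.mem_univ ⟨0, hk⟩) (hfdiag _)
        · have : ¬ ∀ i, G.Adj (u i) (v i) := fun hadj => he (show u ≠ v ∧ ∀ i, G.Adj (u i) (v i) from ⟨huv, hadj⟩)
          push_neg at this
          obtain ⟨i, hi⟩ := this
          exact Finset.prod_eq_zero (Finset.mem_univ i) (hfE _ (by simpa using hi))
    · intro u
      rw [sum_incident, step1]
      exact Finset.prod_le_one (fun i _ => hfrow0 _) (fun i _ => hfrow _)
    · have key : ∑ u : Fin k → V, ∑ v : Fin k → V, h s(u, v)
          = (∑ a : V, ∑ b : V, f s(a, b)) ^ k := by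
        calc ∑ u : Fin k → V, ∑ v, h s(u, v) = ∑ u : Fin k → V, ∏ i, ∑ y, f s(u i, y) :=
              Finset.sum_congr rfl fun u _ => step1 u
          _ = ∏ _i : Fin k, ∑ a : V, ∑ y, f s(a, y) := by
              rw [Finset.prod_univ_sum, Fintype.piFinset_univ]
          _ = (∑ a : V, ∑ b : V, f s(a, b)) ^ k := by
              rw [Finset.prod_const, Finset.card_univ, Fintype.card_fin]
      have := sum_pairs h hdiag
      rw [key, hftot] at this
      have hcard : (Fintype.card (Fin k → V) : ℝ) = (Fintype.card V : ℝ) ^ k := by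
        rw [Fintype.card_fun, Fintype.card_fin]; push_cast; ring
      rw [hcard]
      linarith
end

section
/- For every two finite simple graphs G and H, the ultimate categorical independence ratio of the disjoint union equals that of the tensor product: A(G + H) = A(G × H). -/
open SimpleGraph Filter Topology

variable {V W : Type*}

section Aux

variable {X : Type*}

lemma tensorPow_adj {k : ℕ} (F : SimpleGraph X) (u v : Fin k → X) :
    (tensorPow F k).Adj u v ↔ u ≠ v ∧ ∀ i, F.Adj (u i) (v i) := Iff.rfl

lemma tensorProd_adj (G : SimpleGraph V) (H : SimpleGraph W) (p q : V × W) :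
    (tensorProd G H).Adj p q ↔ G.Adj p.1 q.1 ∧ H.Adj p.2 q.2 := Iff.rfl

lemma indepSet_empty (F : SimpleGraph X) : _root_.IsIndepSet F ((∅ : Finset X) : Set X) := by
  intro u hu; simp at hu

lemma indepNum_bddAbove (F : SimpleGraph X) [Fintype X] :
    BddAbove {n | ∃ s : Finset X, _root_.IsIndepSet F ↑s ∧ s.card = n} := by
  refine ⟨Fintype.card X, ?_⟩
  rintro n ⟨s, -, rfl⟩
  exact (Finset.card_le_univ s).trans_eq Finset.card_univ

lemma exists_indepNum (F : SimpleGraph X) [Fintype X] :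
    ∃ s : Finset X, _root_.IsIndepSet F ↑s ∧ s.card = _root_.indepNum F := by
  refine Nat.sSup_mem ⟨0, ?_⟩ (indepNum_bddAbove F)
  exact ⟨∅, indepSet_empty F, by simp⟩

lemma le_indepNum (F : SimpleGraph X) [Fintype X] {s : Finset X}
    (h : _root_.IsIndepSet F ↑s) : s.card ≤ _root_.indepNum F :=
  le_csSup (indepNum_bddAbove F) ⟨s, h, rfl⟩

lemma sum_pow_id (m : ℕ) (x y : ℝ) :
    ∑ T ∈ (Finset.univ : Finset (Fin m)).powerset, x ^ T.card * y ^ (m - T.card)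
      = (x + y) ^ m := by
  have h := Finset.prod_add (fun _ : Fin m => x) (fun _ => y) Finset.univ
  simp only [Finset.prod_const] at h
  rw [Finset.card_univ, Fintype.card_fin] at h
  rw [h]
  exact Finset.sum_congr rfl fun T hT => by
    rw [Finset.card_sdiff_of_subset (Finset.subset_univ T), Finset.card_univ, Fintype.card_fin]

lemma adj_isLeft_eq {m : ℕ} (G : SimpleGraph V) (H : SimpleGraph W)
    {x y : Fin m → V ⊕ W} (h : ∀ i, (G ⊕g H).Adj (x i) (y i)) (i : Fin m) :
    (x i).isLeft = (y i).isLeft := by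
  have hi := h i
  cases hx : x i <;> cases hy : y i <;> rw [hx, hy] at hi <;> simp_all [SimpleGraph.sum_adj]

lemma sum_adj_inl (G : SimpleGraph V) (H : SimpleGraph W) (a b : V) :
    (G ⊕g H).Adj (Sum.inl a) (Sum.inl b) ↔ G.Adj a b := Iff.rfl

lemma sum_adj_inr (G : SimpleGraph V) (H : SimpleGraph W) (a b : W) :
    (G ⊕g H).Adj (Sum.inr a) (Sum.inr b) ↔ H.Adj a b := Iff.rfl

end Aux

section MainAux

variable (G : SimpleGraph V) (H : SimpleGraph W)
variable [Fintype V] [Fintype W] [Nonempty V] [Nonempty W]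



lemma padding (n : ℕ) (hn : 1 ≤ n) :
    _root_.indepNum (tensorPow (tensorProd G H) n) * (Fintype.card V * Fintype.card W)
      ≤ _root_.indepNum (tensorPow (tensorProd G H) (n + 1)) := by
  classical
  obtain ⟨U, hU, hcard⟩ := exists_indepNum (tensorPow (tensorProd G H) n)
  set f : (Fin n → V × W) × (V × W) → (Fin (n + 1) → V × W) :=
    fun p => Fin.snoc p.1 p.2 with hf
  have hinj : Function.Injective f := by
    rintro ⟨u, x⟩ ⟨u', x'⟩ h
    simp only [hf] at h
    have h1 : u = u' := funext fun j => by
      have := congrFun h j.castSucc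
      simpa [Fin.snoc_castSucc] using this
    have h2 : x = x' := by
      have := congrFun h (Fin.last n)
      simpa [Fin.snoc_last] using this
    simp [h1, h2]
  have hTind : _root_.IsIndepSet (tensorPow (tensorProd G H) (n + 1))
      ↑((U ×ˢ Finset.univ).image f) := by
    intro x hx y hy hadj
    rw [Finset.mem_coe, Finset.mem_image] at hx hy
    obtain ⟨⟨u, p⟩, hmem, rfl⟩ := hx
    obtain ⟨⟨u', p'⟩, hmem', rfl⟩ := hy
    rw [Finset.mem_product] at hmem hmem'
    rw [tensorPow_adj] at hadj
    obtain ⟨hne, hall⟩ := hadj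
    by_cases huu : u = u'
    · have h0 : (0 : ℕ) < n := hn
      have hc := (hall ((⟨0, h0⟩ : Fin n).castSucc)).1
      simp only [hf, Fin.snoc_castSucc] at hc
      rw [huu] at hc
      exact G.loopless.irrefl _ hc
    · refine hU hmem.1 hmem'.1 ⟨huu, fun j => ?_⟩
      have := hall j.castSucc
      simpa only [hf, Fin.snoc_castSucc] using this
  have := le_indepNum _ hTind
  rwa [Finset.card_image_of_injective _ hinj, Finset.card_product, hcard,
    Finset.card_univ, Fintype.card_prod] at this


set_option linter.unusedSectionVars false in
lemma block_upper (m N : ℕ) (hm : 1 ≤ m) (T : Finset (Fin m))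
    (hkN : T.card ≤ N) (hlN : m - T.card ≤ N)
    {U : Finset (Fin m → V ⊕ W)} (hU : _root_.IsIndepSet (tensorPow (G ⊕g H) m) ↑U) :
    (U.filter fun u => (Finset.univ.filter fun i => (u i).isLeft = true) = T).card
        * (Fintype.card V ^ (N - T.card) * Fintype.card W ^ (N - (m - T.card)))
      ≤ _root_.indepNum (tensorPow (tensorProd G H) N) := by
  classical
  set k := T.card with hk
  set l := m - T.card with hl
  have hcard1 : Fintype.card {i : Fin m // i ∈ T} = k := by simp [hk]
  have hcard2 : Fintype.card {i : Fin m // i ∉ T} = l := by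
    have h2 := Fintype.card_subtype_compl (fun i : Fin m => i ∈ T)
    exact h2.trans (by simp [hk, hl])
  set eV : ({i : Fin m // i ∈ T} ⊕ Fin (N - k)) ≃ Fin N :=
    Fintype.equivOfCardEq (by
      rw [Fintype.card_sum, hcard1, Fintype.card_fin, Fintype.card_fin,
        Nat.add_sub_cancel' hkN]) with heV
  set eW : ({i : Fin m // i ∉ T} ⊕ Fin (N - l)) ≃ Fin N :=
    Fintype.equivOfCardEq (by
      rw [Fintype.card_sum, hcard2, Fintype.card_fin, Fintype.card_fin,
        Nat.add_sub_cancel' hlN]) with heW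
  set v0 : V := Classical.arbitrary V with hv0
  set w0 : W := Classical.arbitrary W with hw0
  set Us := U.filter fun u => (Finset.univ.filter fun i => (u i).isLeft = true) = T with hUs
  set φ : (Fin m → V ⊕ W) × ((Fin (N - k) → V) × (Fin (N - l) → W)) → (Fin N → V × W) :=
    fun p j => (Sum.elim (fun i => ((p.1 i.1).getLeft?).getD v0) p.2.1 (eV.symm j),
                Sum.elim (fun i => ((p.1 i.1).getRight?).getD w0) p.2.2 (eW.symm j)) with hφ
  have hpatt : ∀ u ∈ Us, ∀ i : Fin m, ((u i).isLeft = true ↔ i ∈ T) := by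
    intro u hu i
    have h2 := (Finset.mem_filter.mp hu).2
    rw [← h2]
    simp
  have hgetl : ∀ u ∈ Us, ∀ i : Fin m, i ∈ T → u i = Sum.inl (((u i).getLeft?).getD v0) := by
    intro u hu i hi
    cases hui : u i with
    | inl x => simp
    | inr x =>
        have := (hpatt u hu i).mpr hi
        rw [hui] at this; simp at this
  have hgetr : ∀ u ∈ Us, ∀ i : Fin m, i ∉ T → u i = Sum.inr (((u i).getRight?).getD w0) := by
    intro u hu i hi
    cases hui : u i with
    | inr x => simp
    | inl x =>
        have := (hpatt u hu i).mp (by rw [hui]; rfl)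
        exact absurd this hi
  set Dom := Us ×ˢ ((Finset.univ : Finset (Fin (N - k) → V)) ×ˢ
      (Finset.univ : Finset (Fin (N - l) → W))) with hDom
  have hinj : Set.InjOn φ ↑Dom := by
    rintro ⟨u, a, b⟩ hx ⟨u', a', b'⟩ hy h
    rw [Finset.mem_coe, hDom, Finset.mem_product] at hx hy
    have hu : u ∈ Us := hx.1
    have hu' : u' ∈ Us := hy.1
    have hU1 : u = u' := by
      funext i
      by_cases hi : i ∈ T
      · have := congrArg Prod.fst (congrFun h (eV (Sum.inl ⟨i, hi⟩)))
        simp only [hφ, Equiv.symm_apply_apply, Sum.elim_inl] at this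
        rw [hgetl u hu i hi, hgetl u' hu' i hi, this]
      · have := congrArg Prod.snd (congrFun h (eW (Sum.inl ⟨i, hi⟩)))
        simp only [hφ, Equiv.symm_apply_apply, Sum.elim_inl] at this
        rw [hgetr u hu i hi, hgetr u' hu' i hi, this]
    have hA : a = a' := by
      funext t
      have := congrArg Prod.fst (congrFun h (eV (Sum.inr t)))
      simpa only [hφ, Equiv.symm_apply_apply, Sum.elim_inr] using this
    have hB : b = b' := by
      funext t
      have := congrArg Prod.snd (congrFun h (eW (Sum.inr t)))
      simpa only [hφ, Equiv.symm_apply_apply, Sum.elim_inr] using this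
    simp [hU1, hA, hB]
  have hind : _root_.IsIndepSet (tensorPow (tensorProd G H) N) ↑(Dom.image φ) := by
    intro x hx y hy hadj
    rw [Finset.mem_coe, Finset.mem_image] at hx hy
    obtain ⟨⟨u, a, b⟩, hmem, rfl⟩ := hx
    obtain ⟨⟨u', a', b'⟩, hmem', rfl⟩ := hy
    rw [hDom, Finset.mem_product] at hmem hmem'
    have hu : u ∈ Us := hmem.1
    have hu' : u' ∈ Us := hmem'.1
    rw [tensorPow_adj] at hadj
    obtain ⟨hne, hall⟩ := hadj
    by_cases huu : u = u'
    · have i0 : Fin m := ⟨0, hm⟩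
      by_cases hi0 : i0 ∈ T
      · have hc := (hall (eV (Sum.inl ⟨i0, hi0⟩))).1
        simp only [hφ, Equiv.symm_apply_apply, Sum.elim_inl] at hc
        rw [huu] at hc
        exact G.loopless.irrefl _ hc
      · have hc := (hall (eW (Sum.inl ⟨i0, hi0⟩))).2
        simp only [hφ, Equiv.symm_apply_apply, Sum.elim_inl] at hc
        rw [huu] at hc
        exact H.loopless.irrefl _ hc
    · refine hU (Finset.mem_filter.mp hu).1 (Finset.mem_filter.mp hu').1 ⟨huu, fun i => ?_⟩
      by_cases hi : i ∈ T
      · have hc := (hall (eV (Sum.inl ⟨i, hi⟩))).1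
        simp only [hφ, Equiv.symm_apply_apply, Sum.elim_inl] at hc
        rw [hgetl u hu i hi, hgetl u' hu' i hi]
        exact (sum_adj_inl G H _ _).mpr hc
      · have hc := (hall (eW (Sum.inl ⟨i, hi⟩))).2
        simp only [hφ, Equiv.symm_apply_apply, Sum.elim_inl] at hc
        rw [hgetr u hu i hi, hgetr u' hu' i hi]
        exact (sum_adj_inr G H _ _).mpr hc
  have hle := le_indepNum _ hind
  rwa [Finset.card_image_of_injOn hinj, hDom, Finset.card_product, Finset.card_product,
    Finset.card_univ, Finset.card_univ, Fintype.card_fun, Fintype.card_fun,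
    Fintype.card_fin, Fintype.card_fin] at hle

set_option linter.unusedSectionVars false in
lemma block_lower (m n : ℕ) (hn : 1 ≤ n) (T : Finset (Fin m))
    (hk : n ≤ T.card) (hl : n ≤ m - T.card) :
    ∃ D : Finset (Fin m → V ⊕ W),
      (∀ x ∈ D, (Finset.univ.filter fun i => (x i).isLeft = true) = T) ∧
      _root_.IsIndepSet (tensorPow (G ⊕g H) m) ↑D ∧
      D.card = _root_.indepNum (tensorPow (tensorProd G H) n)
        * (Fintype.card V ^ (T.card - n) * Fintype.card W ^ (m - T.card - n)) := by
  classical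
  obtain ⟨U, hU, hcard⟩ := exists_indepNum (tensorPow (tensorProd G H) n)
  have hcard1 : Fintype.card {i : Fin m // i ∈ T} = T.card := by simp
  have hcard2 : Fintype.card {i : Fin m // i ∉ T} = m - T.card := by
    have h2 := Fintype.card_subtype_compl (fun i : Fin m => i ∈ T)
    simpa using h2
  set gV : (Fin n ⊕ Fin (T.card - n)) ≃ {i : Fin m // i ∈ T} :=
    Fintype.equivOfCardEq (by
      rw [Fintype.card_sum, hcard1, Fintype.card_fin, Fintype.card_fin,
        Nat.add_sub_cancel' hk]) with hgV
  set gW : (Fin n ⊕ Fin (m - T.card - n)) ≃ {i : Fin m // i ∉ T} :=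
    Fintype.equivOfCardEq (by
      rw [Fintype.card_sum, hcard2, Fintype.card_fin, Fintype.card_fin,
        Nat.add_sub_cancel' hl]) with hgW
  set ψ : (Fin n → V × W) × ((Fin (T.card - n) → V) × (Fin (m - T.card - n) → W)) →
      (Fin m → V ⊕ W) :=
    fun p i => if h : i ∈ T then
        Sum.inl (Sum.elim (fun j => (p.1 j).1) p.2.1 (gV.symm ⟨i, h⟩))
      else
        Sum.inr (Sum.elim (fun j => (p.1 j).2) p.2.2 (gW.symm ⟨i, h⟩)) with hψ
  set Dom := U ×ˢ ((Finset.univ : Finset (Fin (T.card - n) → V)) ×ˢ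
      (Finset.univ : Finset (Fin (m - T.card - n) → W))) with hDom
  refine ⟨Dom.image ψ, ?_, ?_, ?_⟩
  · intro x hx
    rw [Finset.mem_image] at hx
    obtain ⟨p, hp, rfl⟩ := hx
    ext i
    by_cases hi : i ∈ T <;> simp [hψ, hi]
  · intro x hx y hy hadj
    rw [Finset.mem_coe, Finset.mem_image] at hx hy
    obtain ⟨⟨u, a, b⟩, hmem, rfl⟩ := hx
    obtain ⟨⟨u', a', b'⟩, hmem', rfl⟩ := hy
    rw [hDom, Finset.mem_product] at hmem hmem'
    rw [tensorPow_adj] at hadj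
    obtain ⟨hne, hall⟩ := hadj
    have hVcoord : ∀ j : Fin n,
        (G ⊕g H).Adj (Sum.inl (u j).1) (Sum.inl (u' j).1) := by
      intro j
      have hc := hall (gV (Sum.inl j)).1
      have hmemT : ((gV (Sum.inl j)) : Fin m) ∈ T := (gV (Sum.inl j)).2
      simp only [hψ, dif_pos hmemT] at hc
      rw [Subtype.coe_eta, Equiv.symm_apply_apply] at hc
      exact hc
    have hWcoord : ∀ j : Fin n,
        (G ⊕g H).Adj (Sum.inr (u j).2) (Sum.inr (u' j).2) := by
      intro j
      have hc := hall (gW (Sum.inl j)).1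
      have hmemT : ((gW (Sum.inl j)) : Fin m) ∉ T := (gW (Sum.inl j)).2
      simp only [hψ, dif_neg hmemT] at hc
      rw [Subtype.coe_eta, Equiv.symm_apply_apply] at hc
      exact hc
    by_cases huu : u = u'
    · have hc := hVcoord ⟨0, hn⟩
      rw [huu] at hc
      exact G.loopless.irrefl _ ((sum_adj_inl G H _ _).mp hc)
    · refine hU hmem.1 hmem'.1 ⟨huu, fun j => ?_⟩
      exact ⟨(sum_adj_inl G H _ _).mp (hVcoord j), (sum_adj_inr G H _ _).mp (hWcoord j)⟩
  · have hinj : Function.Injective ψ := by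
      rintro ⟨u, a, b⟩ ⟨u', a', b'⟩ h
      have hu : u = u' := by
        funext j
        have h1 := congrFun h (gV (Sum.inl j)).1
        have hmemT : ((gV (Sum.inl j)) : Fin m) ∈ T := (gV (Sum.inl j)).2
        simp only [hψ, dif_pos hmemT, Subtype.coe_eta, Equiv.symm_apply_apply,
          Sum.elim_inl] at h1
        have h2 := congrFun h (gW (Sum.inl j)).1
        have hmemT' : ((gW (Sum.inl j)) : Fin m) ∉ T := (gW (Sum.inl j)).2
        simp only [hψ, dif_neg hmemT', Subtype.coe_eta, Equiv.symm_apply_apply,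
          Sum.elim_inl] at h2
        exact Prod.ext (Sum.inl_injective h1) (Sum.inr_injective h2)
      have hA : a = a' := by
        funext t
        have h1 := congrFun h (gV (Sum.inr t)).1
        have hmemT : ((gV (Sum.inr t)) : Fin m) ∈ T := (gV (Sum.inr t)).2
        simp only [hψ, dif_pos hmemT, Subtype.coe_eta, Equiv.symm_apply_apply,
          Sum.elim_inr] at h1
        exact Sum.inl_injective h1
      have hB : b = b' := by
        funext t
        have h1 := congrFun h (gW (Sum.inr t)).1
        have hmemT : ((gW (Sum.inr t)) : Fin m) ∉ T := (gW (Sum.inr t)).2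
        simp only [hψ, dif_neg hmemT, Subtype.coe_eta, Equiv.symm_apply_apply,
          Sum.elim_inr] at h1
        exact Sum.inr_injective h1
      simp [hu, hA, hB]
    rw [Finset.card_image_of_injective _ hinj, hDom, Finset.card_product,
      Finset.card_product, Finset.card_univ, Finset.card_univ, Fintype.card_fun,
      Fintype.card_fun, Fintype.card_fin, Fintype.card_fin, hcard]

set_option linter.unusedSectionVars false in
lemma lower_sum (m n : ℕ) (hn : 1 ≤ n) :
    ∑ T ∈ (Finset.univ : Finset (Fin m)).powerset.filter
        (fun T => n ≤ T.card ∧ n ≤ m - T.card),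
      _root_.indepNum (tensorPow (tensorProd G H) n)
        * (Fintype.card V ^ (T.card - n) * Fintype.card W ^ (m - T.card - n))
      ≤ _root_.indepNum (tensorPow (G ⊕g H) m) := by
  classical
  have key : ∀ T : Finset (Fin m), ∃ D : Finset (Fin m → V ⊕ W),
      (n ≤ T.card ∧ n ≤ m - T.card) →
        ((∀ x ∈ D, (Finset.univ.filter fun i => (x i).isLeft = true) = T) ∧
        _root_.IsIndepSet (tensorPow (G ⊕g H) m) ↑D ∧
        D.card = _root_.indepNum (tensorPow (tensorProd G H) n)
          * (Fintype.card V ^ (T.card - n) * Fintype.card W ^ (m - T.card - n))) := by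
    intro T
    by_cases h : n ≤ T.card ∧ n ≤ m - T.card
    · obtain ⟨D, h1, h2, h3⟩ := block_lower G H m n hn T h.1 h.2
      exact ⟨D, fun _ => ⟨h1, h2, h3⟩⟩
    · exact ⟨∅, fun hc => absurd hc h⟩
  choose D hD using key
  set P := (Finset.univ : Finset (Fin m)).powerset.filter
      (fun T => n ≤ T.card ∧ n ≤ m - T.card) with hP
  have hmemP : ∀ T ∈ P, n ≤ T.card ∧ n ≤ m - T.card := fun T hT =>
    (Finset.mem_filter.mp hT).2
  have hdisj : ∀ T ∈ P, ∀ T' ∈ P, T ≠ T' → Disjoint (D T) (D T') := by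
    intro T hT T' hT' hne
    rw [Finset.disjoint_left]
    intro x hx hx'
    exact hne ((((hD T) (hmemP T hT)).1 x hx).symm.trans
      (((hD T') (hmemP T' hT')).1 x hx'))
  have hind : _root_.IsIndepSet (tensorPow (G ⊕g H) m) ↑(P.biUnion D) := by
    intro x hx y hy hadj
    rw [Finset.mem_coe, Finset.mem_biUnion] at hx hy
    obtain ⟨T, hT, hxD⟩ := hx
    obtain ⟨T', hT', hyD⟩ := hy
    have hadj' := hadj
    rw [tensorPow_adj] at hadj'
    have hTT : T = T' := by
      rw [← ((hD T) (hmemP T hT)).1 x hxD, ← ((hD T') (hmemP T' hT')).1 y hyD]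
      ext i
      simp only [Finset.mem_filter, Finset.mem_univ, true_and]
      rw [adj_isLeft_eq G H hadj'.2 i]
    rw [hTT] at hxD
    exact ((hD T') (hmemP T' hT')).2.1 hxD hyD hadj
  have hle := le_indepNum _ hind
  calc ∑ T ∈ P, _root_.indepNum (tensorPow (tensorProd G H) n)
        * (Fintype.card V ^ (T.card - n) * Fintype.card W ^ (m - T.card - n))
      = ∑ T ∈ P, (D T).card :=
        Finset.sum_congr rfl fun T hT => (((hD T) (hmemP T hT)).2.2).symm
    _ = (P.biUnion D).card := (Finset.card_biUnion hdisj).symm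
    _ ≤ _ := hle

set_option linter.unusedSectionVars false in
lemma upper_sum (m : ℕ) (hm : 1 ≤ m) (b : ℝ)
    (hb : ∀ N : ℕ, 1 ≤ N → (_root_.indepNum (tensorPow (tensorProd G H) N) : ℝ)
          ≤ b * ((Fintype.card V : ℝ) * (Fintype.card W : ℝ)) ^ N) :
    (_root_.indepNum (tensorPow (G ⊕g H) m) : ℝ)
      ≤ b * ((Fintype.card V : ℝ) + (Fintype.card W : ℝ)) ^ m := by
  classical
  set v : ℝ := (Fintype.card V : ℝ) with hv
  set w : ℝ := (Fintype.card W : ℝ) with hw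
  have hv0 : 0 < v := by rw [hv]; exact_mod_cast Fintype.card_pos
  have hw0 : 0 < w := by rw [hw]; exact_mod_cast Fintype.card_pos
  obtain ⟨U, hU, hcard⟩ := exists_indepNum (tensorPow (G ⊕g H) m)
  rw [← hcard]
  have hfib : U.card = ∑ T ∈ (Finset.univ : Finset (Fin m)).powerset,
      (U.filter fun u => (Finset.univ.filter fun i => (u i).isLeft = true) = T).card := by
    refine Finset.card_eq_sum_card_fiberwise fun u _ => ?_
    exact Finset.mem_powerset.mpr (Finset.filter_subset _ _ |>.trans (Finset.subset_univ _))
  rw [hfib]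
  push_cast
  have hterm : ∀ T ∈ (Finset.univ : Finset (Fin m)).powerset,
      ((U.filter fun u =>
          (Finset.univ.filter fun i => (u i).isLeft = true) = T).card : ℝ)
        ≤ b * (v ^ T.card * w ^ (m - T.card)) := by
    intro T _
    set N := max (max T.card (m - T.card)) 1 with hN
    have hkN : T.card ≤ N := le_max_of_le_left (le_max_left _ _)
    have hlN : m - T.card ≤ N := le_max_of_le_left (le_max_right _ _)
    have hN1 : 1 ≤ N := le_max_right _ _
    have hblock := block_upper G H m N hm T hkN hlN hU
    have hblockR : ((U.filter fun u =>
          (Finset.univ.filter fun i => (u i).isLeft = true) = T).card : ℝ)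
          * (v ^ (N - T.card) * w ^ (N - (m - T.card)))
        ≤ (_root_.indepNum (tensorPow (tensorProd G H) N) : ℝ) := by
      rw [hv, hw]
      exact_mod_cast hblock
    have hbN := hb N hN1
    have hX : (0 : ℝ) < v ^ (N - T.card) * w ^ (N - (m - T.card)) :=
      mul_pos (pow_pos hv0 _) (pow_pos hw0 _)
    have hsplit : b * (v * w) ^ N
        = (b * (v ^ T.card * w ^ (m - T.card)))
            * (v ^ (N - T.card) * w ^ (N - (m - T.card))) := by
      have e1 : v ^ N = v ^ T.card * v ^ (N - T.card) := by
        rw [← pow_add, Nat.add_sub_cancel' hkN]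
      have e2 : w ^ N = w ^ (m - T.card) * w ^ (N - (m - T.card)) := by
        rw [← pow_add, Nat.add_sub_cancel' hlN]
      rw [mul_pow, e1, e2]
      ring
    have := hblockR.trans (hbN.trans_eq hsplit)
    exact le_of_mul_le_mul_right this hX
  calc (∑ T ∈ (Finset.univ : Finset (Fin m)).powerset,
        ((U.filter fun u =>
          (Finset.univ.filter fun i => (u i).isLeft = true) = T).card : ℝ))
      ≤ ∑ T ∈ (Finset.univ : Finset (Fin m)).powerset,
          b * (v ^ T.card * w ^ (m - T.card)) := Finset.sum_le_sum hterm
    _ = b * (v + w) ^ m := by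
        rw [← Finset.mul_sum, sum_pow_id]

set_option linter.unusedSectionVars false in
lemma lower_real (n m : ℕ) (hn : 1 ≤ n) :
    ((_root_.indepNum (tensorPow (tensorProd G H) n) : ℝ) /
        ((Fintype.card V : ℝ) * (Fintype.card W : ℝ)) ^ n)
      * (((Fintype.card V : ℝ) + (Fintype.card W : ℝ)) ^ m
         - 2 ^ n * (((Fintype.card V : ℝ) / 2 + (Fintype.card W : ℝ)) ^ m
                    + ((Fintype.card V : ℝ) + (Fintype.card W : ℝ) / 2) ^ m))
      ≤ (_root_.indepNum (tensorPow (G ⊕g H) m) : ℝ) := by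
  classical
  have hv0 : (0 : ℝ) < (Fintype.card V : ℝ) := by exact_mod_cast Fintype.card_pos
  have hw0 : (0 : ℝ) < (Fintype.card W : ℝ) := by exact_mod_cast Fintype.card_pos
  set v : ℝ := (Fintype.card V : ℝ) with hv
  set w : ℝ := (Fintype.card W : ℝ) with hw
  set c : ℝ := (_root_.indepNum (tensorPow (tensorProd G H) n) : ℝ) with hc
  have hc0 : 0 ≤ c := Nat.cast_nonneg _
  have hρ0 : 0 ≤ c / (v * w) ^ n := div_nonneg hc0 (by positivity)
  set P := (Finset.univ : Finset (Fin m)).powerset.filter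
      (fun T => n ≤ T.card ∧ n ≤ m - T.card) with hP
  -- step 1 : ρ * Σ_P weights ≤ A m
  have h1 : ∑ T ∈ P, (c / (v * w) ^ n) * (v ^ T.card * w ^ (m - T.card))
      ≤ (_root_.indepNum (tensorPow (G ⊕g H) m) : ℝ) := by
    have hNat := lower_sum G H m n hn
    have hcast : ((∑ T ∈ P, _root_.indepNum (tensorPow (tensorProd G H) n)
        * (Fintype.card V ^ (T.card - n) * Fintype.card W ^ (m - T.card - n)) : ℕ) : ℝ)
        ≤ (_root_.indepNum (tensorPow (G ⊕g H) m) : ℝ) := by exact_mod_cast hNat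
    push_cast at hcast
    refine le_trans (le_of_eq ?_) hcast
    refine Finset.sum_congr rfl fun T hT => ?_
    obtain ⟨hk, hl⟩ := (Finset.mem_filter.mp hT).2
    have e1 : v ^ T.card = v ^ n * v ^ (T.card - n) := by
      rw [← pow_add, Nat.add_sub_cancel' hk]
    have e2 : w ^ (m - T.card) = w ^ n * w ^ (m - T.card - n) := by
      rw [← pow_add, Nat.add_sub_cancel' hl]
    rw [e1, e2, mul_pow]
    have hvn : v ^ n ≠ 0 := by positivity
    have hwn : w ^ n ≠ 0 := by positivity
    field_simp
    ring
  -- step 2 : Σ_P weights ≥ (v+w)^m - 2^n ((v/2+w)^m + (v+w/2)^m)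
  have h2 : (v + w) ^ m - 2 ^ n * ((v / 2 + w) ^ m + (v + w / 2) ^ m)
      ≤ ∑ T ∈ P, v ^ T.card * w ^ (m - T.card) := by
    have hsplit := Finset.sum_filter_add_sum_filter_not
      (Finset.univ : Finset (Fin m)).powerset
      (fun T => n ≤ T.card ∧ n ≤ m - T.card)
      (fun T => v ^ T.card * w ^ (m - T.card))
    have hfull : ∑ T ∈ (Finset.univ : Finset (Fin m)).powerset,
        v ^ T.card * w ^ (m - T.card) = (v + w) ^ m := sum_pow_id m v w
    have hbad : ∑ T ∈ (Finset.univ : Finset (Fin m)).powerset.filter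
          (fun T => ¬(n ≤ T.card ∧ n ≤ m - T.card)),
        v ^ T.card * w ^ (m - T.card)
        ≤ 2 ^ n * ((v / 2 + w) ^ m + (v + w / 2) ^ m) := by
      have hterm : ∀ T ∈ (Finset.univ : Finset (Fin m)).powerset.filter
            (fun T => ¬(n ≤ T.card ∧ n ≤ m - T.card)),
          v ^ T.card * w ^ (m - T.card)
            ≤ 2 ^ n * ((v / 2) ^ T.card * w ^ (m - T.card)
                + v ^ T.card * (w / 2) ^ (m - T.card)) := by
        intro T hT
        have hbadT := (Finset.mem_filter.mp hT).2
        rw [not_and_or, not_le, not_le] at hbadT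
        have hx1 : (0:ℝ) ≤ (v / 2) ^ T.card * w ^ (m - T.card) := by positivity
        have hx2 : (0:ℝ) ≤ v ^ T.card * (w / 2) ^ (m - T.card) := by positivity
        rcases hbadT with hkn | hln
        · have : v ^ T.card * w ^ (m - T.card)
              ≤ 2 ^ n * ((v / 2) ^ T.card * w ^ (m - T.card)) := by
            have hvk : v ^ T.card = 2 ^ T.card * (v / 2) ^ T.card := by
              rw [div_pow, ← mul_div_assoc, mul_comm, mul_div_assoc, div_self (by positivity : (2:ℝ)^T.card ≠ 0), mul_one]
            rw [hvk, mul_assoc]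
            refine mul_le_mul_of_nonneg_right ?_ (by positivity)
            exact pow_le_pow_right₀ one_le_two hkn.le
          have hpos : (0:ℝ) ≤ 2 ^ n * (v ^ T.card * (w / 2) ^ (m - T.card)) := by positivity
          linarith
        · have : v ^ T.card * w ^ (m - T.card)
              ≤ 2 ^ n * (v ^ T.card * (w / 2) ^ (m - T.card)) := by
            have hwk : w ^ (m - T.card) = 2 ^ (m - T.card) * (w / 2) ^ (m - T.card) := by
              rw [div_pow, ← mul_div_assoc, mul_comm, mul_div_assoc, div_self (by positivity : (2:ℝ)^(m - T.card) ≠ 0), mul_one]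
            calc v ^ T.card * w ^ (m - T.card)
                = 2 ^ (m - T.card) * (v ^ T.card * (w / 2) ^ (m - T.card)) := by
                  rw [hwk]; ring
              _ ≤ 2 ^ n * (v ^ T.card * (w / 2) ^ (m - T.card)) := by
                  refine mul_le_mul_of_nonneg_right ?_ (by positivity)
                  exact pow_le_pow_right₀ one_le_two hln.le
          have hpos : (0:ℝ) ≤ 2 ^ n * ((v / 2) ^ T.card * w ^ (m - T.card)) := by positivity
          linarith
      calc ∑ T ∈ (Finset.univ : Finset (Fin m)).powerset.filter
            (fun T => ¬(n ≤ T.card ∧ n ≤ m - T.card)),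
          v ^ T.card * w ^ (m - T.card)
          ≤ ∑ T ∈ (Finset.univ : Finset (Fin m)).powerset.filter
              (fun T => ¬(n ≤ T.card ∧ n ≤ m - T.card)),
            2 ^ n * ((v / 2) ^ T.card * w ^ (m - T.card)
              + v ^ T.card * (w / 2) ^ (m - T.card)) := Finset.sum_le_sum hterm
        _ ≤ ∑ T ∈ (Finset.univ : Finset (Fin m)).powerset,
            2 ^ n * ((v / 2) ^ T.card * w ^ (m - T.card)
              + v ^ T.card * (w / 2) ^ (m - T.card)) := by
            refine Finset.sum_le_sum_of_subset_of_nonneg (Finset.filter_subset _ _) ?_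
            intro T _ _
            positivity
        _ = 2 ^ n * ((v / 2 + w) ^ m + (v + w / 2) ^ m) := by
            rw [← Finset.mul_sum, Finset.sum_add_distrib, sum_pow_id, sum_pow_id]
    linarith
  calc (c / (v * w) ^ n)
      * ((v + w) ^ m - 2 ^ n * ((v / 2 + w) ^ m + (v + w / 2) ^ m))
      ≤ (c / (v * w) ^ n) * ∑ T ∈ P, v ^ T.card * w ^ (m - T.card) :=
        mul_le_mul_of_nonneg_left h2 hρ0
    _ = ∑ T ∈ P, (c / (v * w) ^ n) * (v ^ T.card * w ^ (m - T.card)) :=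
        Finset.mul_sum _ _ _
    _ ≤ _ := h1

end MainAux

theorem stmt15 (G : SimpleGraph V) (H : SimpleGraph W)
    [Fintype V] [Fintype W] [Nonempty V] [Nonempty W] :
    ∀ a b : ℝ,
      Tendsto (fun n : ℕ => indepRatio (tensorPow (G ⊕g H) (n + 1))) atTop (𝓝 a) →
      Tendsto (fun n : ℕ => indepRatio (tensorPow (tensorProd G H) (n + 1))) atTop (𝓝 b) →
      a = b := by
  intro a b ha hb
  classical
  have hv0 : (0 : ℝ) < (Fintype.card V : ℝ) := by exact_mod_cast Fintype.card_pos
  have hw0 : (0 : ℝ) < (Fintype.card W : ℝ) := by exact_mod_cast Fintype.card_pos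
  have hvw0 : (0 : ℝ) < (Fintype.card V : ℝ) * (Fintype.card W : ℝ) := mul_pos hv0 hw0
  have hvpw0 : (0 : ℝ) < (Fintype.card V : ℝ) + (Fintype.card W : ℝ) := by linarith
  -- rewritten limit statements
  have hb' : Tendsto (fun p : ℕ => (_root_.indepNum (tensorPow (tensorProd G H) (p + 1)) : ℝ)
      / ((Fintype.card V : ℝ) * (Fintype.card W : ℝ)) ^ (p + 1)) atTop (𝓝 b) := by
    refine Tendsto.congr (fun p => ?_) hb
    rw [indepRatio]
    congr 1
    rw [Fintype.card_fun, Fintype.card_prod, Fintype.card_fin]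
    push_cast
    ring
  have ha' : Tendsto (fun p : ℕ => (_root_.indepNum (tensorPow (G ⊕g H) (p + 1)) : ℝ)
      / ((Fintype.card V : ℝ) + (Fintype.card W : ℝ)) ^ (p + 1)) atTop (𝓝 a) := by
    refine Tendsto.congr (fun p => ?_) ha
    rw [indepRatio]
    congr 1
    rw [Fintype.card_fun, Fintype.card_sum, Fintype.card_fin]
    push_cast
    ring
  -- monotonicity of the product-power ratio
  have hmono : ∀ i : ℕ, 1 ≤ i →
      (_root_.indepNum (tensorPow (tensorProd G H) i) : ℝ)
          / ((Fintype.card V : ℝ) * (Fintype.card W : ℝ)) ^ i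
        ≤ (_root_.indepNum (tensorPow (tensorProd G H) (i + 1)) : ℝ)
          / ((Fintype.card V : ℝ) * (Fintype.card W : ℝ)) ^ (i + 1) := by
    intro i hi
    have hp := padding G H i hi
    have hpc : (_root_.indepNum (tensorPow (tensorProd G H) i) : ℝ)
        * ((Fintype.card V : ℝ) * (Fintype.card W : ℝ))
        ≤ (_root_.indepNum (tensorPow (tensorProd G H) (i + 1)) : ℝ) := by
      exact_mod_cast hp
    rw [div_le_div_iff₀ (pow_pos hvw0 i) (pow_pos hvw0 (i + 1))]
    calc (_root_.indepNum (tensorPow (tensorProd G H) i) : ℝ)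
          * ((Fintype.card V : ℝ) * (Fintype.card W : ℝ)) ^ (i + 1)
        = ((_root_.indepNum (tensorPow (tensorProd G H) i) : ℝ)
            * ((Fintype.card V : ℝ) * (Fintype.card W : ℝ)))
          * ((Fintype.card V : ℝ) * (Fintype.card W : ℝ)) ^ i := by ring
      _ ≤ (_root_.indepNum (tensorPow (tensorProd G H) (i + 1)) : ℝ)
          * ((Fintype.card V : ℝ) * (Fintype.card W : ℝ)) ^ i :=
          mul_le_mul_of_nonneg_right hpc (pow_nonneg hvw0.le i)
  have hmono2 : ∀ i j : ℕ, 1 ≤ i → i ≤ j →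
      (_root_.indepNum (tensorPow (tensorProd G H) i) : ℝ)
          / ((Fintype.card V : ℝ) * (Fintype.card W : ℝ)) ^ i
        ≤ (_root_.indepNum (tensorPow (tensorProd G H) j) : ℝ)
          / ((Fintype.card V : ℝ) * (Fintype.card W : ℝ)) ^ j := by
    intro i j hi hij
    induction j, hij using Nat.le_induction with
    | base => exact le_rfl
    | succ j hij ih => exact ih.trans (hmono j (hi.trans hij))
  have hρb : ∀ N : ℕ, 1 ≤ N →
      (_root_.indepNum (tensorPow (tensorProd G H) N) : ℝ)
          / ((Fintype.card V : ℝ) * (Fintype.card W : ℝ)) ^ N ≤ b := by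
    intro N hN
    refine ge_of_tendsto hb' ?_
    filter_upwards [eventually_ge_atTop N] with p hp
    exact hmono2 N (p + 1) hN (hp.trans (Nat.le_succ p))
  have hcb : ∀ N : ℕ, 1 ≤ N → (_root_.indepNum (tensorPow (tensorProd G H) N) : ℝ)
      ≤ b * ((Fintype.card V : ℝ) * (Fintype.card W : ℝ)) ^ N := by
    intro N hN
    have := hρb N hN
    rwa [div_le_iff₀ (pow_pos hvw0 N)] at this
  -- upper bound : a ≤ b
  have hab : a ≤ b := by
    refine le_of_tendsto ha' (Eventually.of_forall fun p => ?_)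
    rw [div_le_iff₀ (pow_pos hvpw0 (p + 1))]
    exact upper_sum G H (p + 1) (Nat.succ_le_succ (Nat.zero_le p)) b hcb
  -- lower bound : b ≤ a
  have hlow : ∀ n : ℕ, 1 ≤ n →
      (_root_.indepNum (tensorPow (tensorProd G H) n) : ℝ)
          / ((Fintype.card V : ℝ) * (Fintype.card W : ℝ)) ^ n ≤ a := by
    intro n hn
    set ρ : ℝ := (_root_.indepNum (tensorPow (tensorProd G H) n) : ℝ)
        / ((Fintype.card V : ℝ) * (Fintype.card W : ℝ)) ^ n with hρ
    have hρ0 : 0 ≤ ρ := div_nonneg (Nat.cast_nonneg _) (pow_nonneg hvw0.le n)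
    set q1 : ℝ := ((Fintype.card V : ℝ) / 2 + (Fintype.card W : ℝ))
        / ((Fintype.card V : ℝ) + (Fintype.card W : ℝ)) with hq1
    set q2 : ℝ := ((Fintype.card V : ℝ) + (Fintype.card W : ℝ) / 2)
        / ((Fintype.card V : ℝ) + (Fintype.card W : ℝ)) with hq2
    have hq10 : 0 ≤ q1 := by rw [hq1]; positivity
    have hq20 : 0 ≤ q2 := by rw [hq2]; positivity
    have hq11 : q1 < 1 := by rw [hq1, div_lt_one hvpw0]; linarith
    have hq21 : q2 < 1 := by rw [hq2, div_lt_one hvpw0]; linarith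
    have key : ∀ m : ℕ, ρ * (1 - 2 ^ n * (q1 ^ m + q2 ^ m))
        ≤ (_root_.indepNum (tensorPow (G ⊕g H) m) : ℝ)
            / ((Fintype.card V : ℝ) + (Fintype.card W : ℝ)) ^ m := by
      intro m
      have hlr := lower_real G H n m hn
      rw [le_div_iff₀ (pow_pos hvpw0 m)]
      have hq1m : q1 ^ m * ((Fintype.card V : ℝ) + (Fintype.card W : ℝ)) ^ m
          = ((Fintype.card V : ℝ) / 2 + (Fintype.card W : ℝ)) ^ m := by
        rw [hq1, div_pow, div_mul_cancel₀]
        exact pow_ne_zero m hvpw0.ne'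
      have hq2m : q2 ^ m * ((Fintype.card V : ℝ) + (Fintype.card W : ℝ)) ^ m
          = ((Fintype.card V : ℝ) + (Fintype.card W : ℝ) / 2) ^ m := by
        rw [hq2, div_pow, div_mul_cancel₀]
        exact pow_ne_zero m hvpw0.ne'
      calc ρ * (1 - 2 ^ n * (q1 ^ m + q2 ^ m))
            * ((Fintype.card V : ℝ) + (Fintype.card W : ℝ)) ^ m
          = ρ * (((Fintype.card V : ℝ) + (Fintype.card W : ℝ)) ^ m
              - 2 ^ n * (q1 ^ m * ((Fintype.card V : ℝ) + (Fintype.card W : ℝ)) ^ m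
                + q2 ^ m * ((Fintype.card V : ℝ) + (Fintype.card W : ℝ)) ^ m)) := by
            ring
        _ = ρ * (((Fintype.card V : ℝ) + (Fintype.card W : ℝ)) ^ m
              - 2 ^ n * (((Fintype.card V : ℝ) / 2 + (Fintype.card W : ℝ)) ^ m
                + ((Fintype.card V : ℝ) + (Fintype.card W : ℝ) / 2) ^ m)) := by
            rw [hq1m, hq2m]
        _ ≤ _ := hlr
    have htq1 : Tendsto (fun m : ℕ => q1 ^ (m + 1)) atTop (𝓝 0) :=
      (tendsto_pow_atTop_nhds_zero_of_lt_one hq10 hq11).comp (tendsto_add_atTop_nat 1)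
    have htq2 : Tendsto (fun m : ℕ => q2 ^ (m + 1)) atTop (𝓝 0) :=
      (tendsto_pow_atTop_nhds_zero_of_lt_one hq20 hq21).comp (tendsto_add_atTop_nat 1)
    have htend : Tendsto (fun m : ℕ => ρ * (1 - 2 ^ n * (q1 ^ (m + 1) + q2 ^ (m + 1))))
        atTop (𝓝 (ρ * (1 - 2 ^ n * ((0 : ℝ) + 0)))) :=
      tendsto_const_nhds.mul
        (tendsto_const_nhds.sub (tendsto_const_nhds.mul (htq1.add htq2)))
    have := le_of_tendsto_of_tendsto' htend ha' fun m => key (m + 1)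
    simpa using this
  have hba : b ≤ a := by
    refine le_of_tendsto hb' (Eventually.of_forall fun p => ?_)
    exact hlow (p + 1) (Nat.succ_le_succ (Nat.zero_le p))
  linarith
end

section
/- For every finite simple graph G and every k ≥ 2, the independence ratio of the tensor product with the complete graph satisfies i(G × K_k) ≤ max{a(G), 1/k}, where a(G) is the maximum over independent sets I of G of |I|/(|I|+|N(I)|). -/
open SimpleGraph Filter Topology

variable {V W : Type*}

lemma mediant_aux (a b c n k s r : ℝ) (ha : 0 < a) (hb : 0 ≤ b) (hc : 0 ≤ c)
    (hk : 0 < k) (hn : a + b + c = n) (hS : s ≤ k * a + c)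
    (h1 : a / (a + b) ≤ r) (h2 : 1 / k ≤ r) : s / (n * k) ≤ r := by
  have hab : 0 < a + b := by linarith
  have h1' : a ≤ r * (a + b) := (div_le_iff₀ hab).mp h1
  have h2' : 1 ≤ r * k := by
    have := (div_le_iff₀ hk).mp h2
    linarith
  have hnk : 0 < n * k := by nlinarith
  rw [div_le_iff₀ hnk]
  nlinarith [mul_le_mul_of_nonneg_right h1' hk.le, mul_le_mul_of_nonneg_left h2' hc]

theorem stmt16 (G : SimpleGraph V) [Fintype V] [Nonempty V] (k : ℕ) (hk : 2 ≤ k) :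
    indepRatio (tensorProd G (⊤ : SimpleGraph (Fin k))) ≤
      max (aRatio G) (1 / (k : ℝ)) := by
  classical
  set G' := tensorProd G (⊤ : SimpleGraph (Fin k)) with hG'
  -- the set defining indepNum is nonempty and bounded above
  have hne : ({m | ∃ s : Finset (V × Fin k), _root_.IsIndepSet G' ↑s ∧ s.card = m}).Nonempty :=
    ⟨0, ∅, by intro u hu; simp at hu, rfl⟩
  have hbdd : BddAbove {m | ∃ s : Finset (V × Fin k), _root_.IsIndepSet G' ↑s ∧ s.card = m} := by
    refine ⟨Fintype.card (V × Fin k), ?_⟩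
    rintro m ⟨s, _, rfl⟩
    exact Finset.card_le_univ s
  obtain ⟨S, hSind, hScard⟩ := Nat.sSup_mem hne hbdd
  have hIN : _root_.indepNum G' = S.card := hScard.symm
  set n := Fintype.card V with hn
  have hnpos : 0 < n := Fintype.card_pos
  have hk0 : (0:ℝ) < (k:ℝ) := by positivity
  set f : V → ℕ := fun u => (S.filter (fun p => p.1 = u)).card with hf
  have hsum : S.card = ∑ u, f u :=
    Finset.card_eq_sum_card_fiberwise (fun x _ => Finset.mem_univ x.1)
  have hfk : ∀ u, f u ≤ k := by
    intro u
    have h := Finset.card_le_card_of_injOn (fun p => p.2)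
      (fun p _ => Finset.mem_univ p.2) (s := S.filter (fun p => p.1 = u))
      (t := (Finset.univ : Finset (Fin k))) ?_
    · simpa using h
    · intro p hp q hq hpq
      simp only [Finset.coe_filter, Set.mem_setOf_eq] at hp hq
      exact Prod.ext (hp.2.trans hq.2.symm) hpq
  have key : ∀ u v, G.Adj u v → 2 ≤ f u → f v = 0 := by
    intro u v huv h2
    by_contra h0
    obtain ⟨p, hp⟩ := Finset.card_pos.mp (Nat.pos_of_ne_zero h0)
    rw [Finset.mem_filter] at hp
    obtain ⟨a, ha, b, hb, hab⟩ := Finset.one_lt_card.mp h2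
    rw [Finset.mem_filter] at ha hb
    have hab2 : a.2 ≠ b.2 := fun h => hab (Prod.ext (ha.2.trans hb.2.symm) h)
    rcases ne_or_eq a.2 p.2 with h | h
    · refine hSind ha.1 hp.1 ⟨?_, ?_⟩
      · rw [ha.2, hp.2]; exact huv
      · exact h
    · refine hSind hb.1 hp.1 ⟨?_, ?_⟩
      · rw [hb.2, hp.2]; exact huv
      · show b.2 ≠ p.2
        rw [← h]; exact hab2.symm
  set A : Finset V := Finset.univ.filter (fun u => 2 ≤ f u) with hA
  set B : Finset V := Finset.univ.filter (fun v => v ∈ nbhdSet G (↑A : Set V)) with hB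
  have hBf : ∀ v ∈ B, f v = 0 := by
    intro v hv
    rw [hB, Finset.mem_filter] at hv
    obtain ⟨u, hu, huv⟩ := hv.2
    rw [Finset.mem_coe, hA, Finset.mem_filter] at hu
    exact key u v huv hu.2
  have hAB : Disjoint A B := by
    rw [Finset.disjoint_left]
    intro u huA huB
    have h0 := hBf u huB
    rw [hA, Finset.mem_filter] at huA
    omega
  have hBcard : (nbhdSet G (↑A : Set V)).ncard = B.card := by
    rw [← Set.ncard_coe_finset]
    congr 1
    ext v
    simp [hB]
  have hsum1 : ∑ u ∈ A, f u ≤ k * A.card := by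
    calc ∑ u ∈ A, f u ≤ ∑ _u ∈ A, k := Finset.sum_le_sum (fun u _ => hfk u)
      _ = A.card * k := by rw [Finset.sum_const, smul_eq_mul]
      _ = k * A.card := Nat.mul_comm _ _
  have hsum2 : ∑ u ∈ (A ∪ B)ᶜ, f u ≤ (A ∪ B)ᶜ.card := by
    calc ∑ u ∈ (A ∪ B)ᶜ, f u ≤ ∑ _u ∈ (A ∪ B)ᶜ, 1 := by
          refine Finset.sum_le_sum (fun u hu => ?_)
          rw [Finset.mem_compl, Finset.mem_union] at hu
          have h2 : ¬ 2 ≤ f u := by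
            intro h
            exact hu (Or.inl (by rw [hA, Finset.mem_filter]; exact ⟨Finset.mem_univ u, h⟩))
          omega
      _ = (A ∪ B)ᶜ.card := by rw [Finset.sum_const, smul_eq_mul, Nat.mul_one]
  have hSle : S.card ≤ k * A.card + (A ∪ B)ᶜ.card := by
    rw [hsum, ← Finset.sum_add_sum_compl (A ∪ B) f, Finset.sum_union hAB,
      Finset.sum_eq_zero hBf, add_zero]
    exact Nat.add_le_add hsum1 hsum2
  have hcards : A.card + B.card + (A ∪ B)ᶜ.card = n := by
    rw [Finset.card_compl, Finset.card_union_of_disjoint hAB]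
    have hle : (A ∪ B).card ≤ n := Finset.card_le_univ _
    rw [Finset.card_union_of_disjoint hAB] at hle
    omega
  have hratio : indepRatio G' = (S.card : ℝ) / ((n : ℝ) * k) := by
    rw [indepRatio, hIN]
    congr 1
    rw [Fintype.card_prod, Fintype.card_fin]
    push_cast
    ring
  rw [hratio]
  rcases Finset.eq_empty_or_nonempty A with hAe | hAne
  · -- A empty: S.card ≤ n, ratio ≤ 1/k
    have hS : S.card ≤ n := by
      have := hSle
      rw [hAe] at this
      simp only [Finset.card_empty, Nat.mul_zero, Nat.zero_add, Finset.empty_union] at this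
      exact le_trans this (le_trans (Finset.card_le_univ _) (le_of_eq rfl))
    refine le_trans ?_ (le_max_right _ _)
    rw [div_le_div_iff₀ (by positivity) hk0]
    have : (S.card : ℝ) ≤ n := by exact_mod_cast hS
    nlinarith [hnpos, this]
  · -- A nonempty
    have hAind : _root_.IsIndepSet G (↑A : Set V) := by
      intro u hu v hv huv
      rw [Finset.mem_coe, hA, Finset.mem_filter] at hu hv
      have := key u v huv hu.2
      omega
    have hApos : 0 < A.card := Finset.card_pos.mpr hAne
    have habpos : (0:ℝ) < (A.card : ℝ) + (B.card : ℝ) := by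
      have : (0:ℝ) < (A.card : ℝ) := by exact_mod_cast hApos
      have hb0 : (0:ℝ) ≤ (B.card : ℝ) := by positivity
      linarith
    have haR : (A.card : ℝ) / ((A.card : ℝ) + (B.card : ℝ)) ≤ aRatio G := by
      apply le_csSup
      · refine ⟨1, ?_⟩
        rintro r ⟨I, hIne, _, rfl⟩
        have hI : (0:ℝ) < (I.card : ℝ) := by
          exact_mod_cast Finset.card_pos.mpr hIne
        have hN : (0:ℝ) ≤ ((nbhdSet G ↑I).ncard : ℝ) := by positivity
        rw [div_le_one (by linarith)]
        linarith
      · exact ⟨A, hAne, hAind, by rw [hBcard]⟩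
    refine le_trans ?_ (max_le_max haR (le_refl (1 / (k:ℝ))))
    have hApos' : (0:ℝ) < (A.card : ℝ) := by exact_mod_cast hApos
    refine mediant_aux _ (B.card : ℝ) ((A ∪ B)ᶜ.card : ℝ) _ _ _ _ hApos'
      (Nat.cast_nonneg _) (Nat.cast_nonneg _) hk0 ?_ ?_ (le_max_left _ _) (le_max_right _ _)
    · exact_mod_cast hcards
    · exact_mod_cast hSle
end
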